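/- Let H be a metric space, let Γ ⊆ H, and let μ be a probability measure on H supported on Γ. Then for every N ∈ ℕ with N ≥ 1, h_N(μ)² ≤ (4/N) · Σ_{1≤i≤N} r_i(Γ)². Equivalently, there exist points ω_1, …, ω_N ∈ H and nonnegative measures ν_1, …, ν_N on H, each of total mass 1/N and with ν_i supported in the closed ball of center ω_i and radius 2·r_i(Γ), such that μ = Σ_{1≤i≤N} ν_i; consequently W₂(μ, (1/N)Σ_i δ_{ω_i})² ≤ (1/N) Σ_{1≤i≤N} (2 r_i(Γ))². -/

import Mathlib

open MeasureTheory
open scoped ENNReal NNReal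

noncomputable section

/-- Squared quadratic Wasserstein distance. -/
def W2sq {α : Type*} [MeasurableSpace α] [PseudoEMetricSpace α] (η ν : Measure α) : ℝ≥0∞ :=
  ⨅ (π : Measure (α × α)) (_ : π.map Prod.fst = η ∧ π.map Prod.snd = ν),
    ∫⁻ p, edist p.1 p.2 ^ 2 ∂π

/-- Optimal quantization error `h_N(μ)`. -/
def hN {α : Type*} [MeasurableSpace α] [PseudoEMetricSpace α] (μ : Measure α) (N : ℕ) : ℝ≥0∞ :=
  ⨅ ω : Fin N → α, (W2sq μ ((N : ℝ≥0∞)⁻¹ • ∑ j, Measure.dirac (ω j))) ^ (1 / 2 : ℝ)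

/-- Covering radius `r_N(Γ)`: the smallest `r` such that `Γ` is covered by `N` closed balls
of radius `r`. -/
def rN {α : Type*} [PseudoEMetricSpace α] (Γ : Set α) (N : ℕ) : ℝ≥0∞ :=
  ⨅ ω : Fin N → α, sInf {r : ℝ≥0∞ | Γ ⊆ ⋃ j, {x | edist x (ω j) ≤ r}}

section Aux

variable {H : Type*} [MetricSpace H] [MeasurableSpace H] [BorelSpace H] [Nonempty H]

lemma ball_meas (c : H) (r : ℝ≥0∞) : MeasurableSet {x : H | edist x c ≤ r} := by
  have : IsClosed {x : H | edist x c ≤ r} :=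
    isClosed_le (continuous_id.edist continuous_const) continuous_const
  exact this.measurableSet

lemma cover_lem (Γ : Set H) {i : ℕ} (hi : 1 ≤ i) :
    ∃ ω : Fin i → H, Γ ⊆ ⋃ j, {x : H | edist x (ω j) ≤ 2 * rN Γ i} := by
  classical
  rcases eq_or_ne (rN Γ i) 0 with hr0 | hr0
  · -- radius zero: Γ has at most i points
    have hcard : ∀ s : Finset H, ↑s ⊆ Γ → s.card ≤ i := by
      intro s hsΓ
      by_contra hgt
      push_neg at hgt
      have h2 : 1 < s.card := lt_of_le_of_lt hi hgt
      obtain ⟨a, ha, b, hb, hab⟩ := Finset.one_lt_card.mp h2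
      set P : Finset (H × H) := (s ×ˢ s).filter fun p => p.1 ≠ p.2 with hP
      have hPne : P.Nonempty := ⟨(a, b), by simp [hP, Finset.mem_filter, Finset.mem_product, ha, hb, hab]⟩
      set δ : ℝ≥0∞ := P.inf' hPne fun p => edist p.1 p.2 with hδ
      have hδ0 : 0 < δ := by
        rw [hδ, Finset.lt_inf'_iff]
        intro p hp
        have : p.1 ≠ p.2 := (Finset.mem_filter.mp hp).2
        exact edist_pos.mpr this
      have hlt : rN Γ i < δ / 2 := by
        rw [hr0]
        exact ENNReal.div_pos hδ0.ne' (by norm_num)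
      obtain ⟨ω, hω⟩ := iInf_lt_iff.mp
        (show (⨅ ω : Fin i → H, sInf {r : ℝ≥0∞ | Γ ⊆ ⋃ j, {x | edist x (ω j) ≤ r}}) < δ / 2
          from hlt)
      obtain ⟨ρ, hρmem, hρlt⟩ := sInf_lt_iff.mp hω
      -- assign each point of s a ball index
      have hchoice : ∀ x ∈ Γ, ∃ j : Fin i, edist x (ω j) ≤ ρ := by
        intro x hx
        obtain ⟨_, ⟨j, rfl⟩, hj⟩ := hρmem hx
        exact ⟨j, hj⟩
      classical
      set f : H → Fin i := fun x =>
        if h : ∃ j : Fin i, edist x (ω j) ≤ ρ then h.choose else ⟨0, hi⟩ with hf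
      obtain ⟨x, hx, y, hy, hxy, hfxy⟩ :=
        Finset.exists_ne_map_eq_of_card_lt_of_maps_to
          (t := (Finset.univ : Finset (Fin i)))
          (by simpa using hgt) (fun x _ => Finset.mem_univ (f x))
      have hxball : edist x (ω (f x)) ≤ ρ := by
        have h := hchoice x (hsΓ hx)
        simp only [hf, dif_pos h]
        exact h.choose_spec
      have hyball : edist y (ω (f y)) ≤ ρ := by
        have h := hchoice y (hsΓ hy)
        simp only [hf, dif_pos h]
        exact h.choose_spec
      have hclose : edist x y < δ := by
        calc edist x y ≤ edist x (ω (f x)) + edist (ω (f x)) y := edist_triangle _ _ _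
          _ = edist x (ω (f x)) + edist y (ω (f y)) := by rw [edist_comm (ω (f x)) y, hfxy]
          _ ≤ ρ + ρ := add_le_add hxball hyball
          _ < δ / 2 + δ / 2 := ENNReal.add_lt_add hρlt hρlt
          _ = δ := ENNReal.add_halves δ
      have hge : δ ≤ edist x y := by
        have hmem : (x, y) ∈ P := by
          simp [hP, Finset.mem_filter, Finset.mem_product, hx, hy, hxy]
        exact Finset.inf'_le (fun p : H × H => edist p.1 p.2) hmem
      exact absurd hclose (not_lt.mpr hge)
    have hfin : Γ.Finite := by
      by_contra hinf
      obtain ⟨s, hs, hcard'⟩ := Set.Infinite.exists_subset_card_eq hinf (i + 1)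
      have := hcard s hs
      omega
    classical
    set s : Finset H := hfin.toFinset with hs
    have hsc : s.card ≤ i := hcard s (by simp [hs])
    set l : List H := s.toList with hl
    refine ⟨fun j => l.getD j (Classical.arbitrary H), fun x hx => ?_⟩
    have hxs : x ∈ l := by
      rw [hl, Finset.mem_toList, hs, Set.Finite.mem_toFinset]
      exact hx
    obtain ⟨n, hn, hget⟩ := List.mem_iff_getElem.mp hxs
    have hni : n < i := lt_of_lt_of_le (by rwa [hl, Finset.length_toList] at hn) hsc
    refine Set.mem_iUnion.mpr ⟨⟨n, hni⟩, ?_⟩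
    have : l.getD n (Classical.arbitrary H) = x := by
      rw [List.getD_eq_getElem l _ hn, hget]
    simp only [Set.mem_setOf_eq, this]
    simp [edist_self]
  · rcases eq_or_ne (rN Γ i) ⊤ with hrtop | hrtop
    · refine ⟨fun _ => Classical.arbitrary H, fun x _ => Set.mem_iUnion.mpr ⟨⟨0, hi⟩, ?_⟩⟩
      simp [hrtop]
    · have hlt : rN Γ i < 2 * rN Γ i := by
        rw [two_mul]
        exact ENNReal.lt_add_right hrtop hr0
      obtain ⟨ω, hω⟩ := iInf_lt_iff.mp
        (show (⨅ ω : Fin i → H, sInf {r : ℝ≥0∞ | Γ ⊆ ⋃ j, {x | edist x (ω j) ≤ r}}) <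
            2 * rN Γ i from hlt)
      obtain ⟨ρ, hρmem, hρlt⟩ := sInf_lt_iff.mp hω
      refine ⟨ω, Set.Subset.trans hρmem (Set.iUnion_mono fun j x hx => le_trans hx hρlt.le)⟩

lemma build_lem (Γ : Set H) (μ : Measure H) [IsProbabilityMeasure μ]
    (hsupp : ∀ᵐ x ∂μ, x ∈ Γ) (N : ℕ) (hN1 : 1 ≤ N) :
    ∀ (k : ℕ) (σ : Measure H), σ ≤ μ → σ Set.univ = k / N →
    ∃ (ω : ℕ → H) (ν : ℕ → Measure H),
      (∀ i ∈ Finset.Icc 1 k, ν i Set.univ = 1 / N) ∧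
      (∀ i ∈ Finset.Icc 1 k, ν i {x : H | edist x (ω i) ≤ 2 * rN Γ i}ᶜ = 0) ∧
      σ = ∑ i ∈ Finset.Icc 1 k, ν i := by
  have hμΓ : μ Γᶜ = 0 := by
    rw [ae_iff] at hsupp
    simpa [Set.compl_def] using hsupp
  intro k
  induction k with
  | zero =>
    intro σ hle hmass
    refine ⟨fun _ => Classical.arbitrary H, fun _ => 0, by simp, by simp, ?_⟩
    simp only [Finset.Icc_self, Nat.cast_zero] at *
    have : σ Set.univ = 0 := by simpa using hmass
    simp [Measure.measure_univ_eq_zero.mp this]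
  | succ k ih =>
    intro σ hle hmass
    obtain ⟨c, hc⟩ := cover_lem Γ (Nat.succ_le_succ (Nat.zero_le k))
    set B : Fin (k + 1) → Set H := fun j => {x : H | edist x (c j) ≤ 2 * rN Γ (k + 1)} with hB
    have hσΓ : σ Γᶜ = 0 :=
      le_antisymm (le_trans (Measure.le_iff'.mp hle _) hμΓ.le) zero_le
    have h1 : σ Set.univ ≤ ∑ j : Fin (k + 1), σ (B j) := by
      calc σ Set.univ ≤ σ ((⋃ j, B j) ∪ Γᶜ) := by
            refine measure_mono fun x _ => ?_
            by_cases hx : x ∈ Γ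
            · exact Or.inl (hc hx)
            · exact Or.inr hx
        _ ≤ σ (⋃ j, B j) + σ Γᶜ := measure_union_le _ _
        _ = σ (⋃ j, B j) := by rw [hσΓ, add_zero]
        _ ≤ ∑ j : Fin (k + 1), σ (B j) := measure_iUnion_fintype_le _ _
    obtain ⟨j₀, -, hj₀⟩ := Finset.exists_max_image Finset.univ (fun j => σ (B j))
      ⟨⟨0, Nat.succ_pos k⟩, Finset.mem_univ _⟩
    have hsum : ∑ j : Fin (k + 1), σ (B j) ≤ ((k : ℝ≥0∞) + 1) * σ (B j₀) := by
      calc ∑ j : Fin (k + 1), σ (B j) ≤ ∑ _j : Fin (k + 1), σ (B j₀) :=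
            Finset.sum_le_sum fun j _ => hj₀ j (Finset.mem_univ _)
        _ = ((k : ℝ≥0∞) + 1) * σ (B j₀) := by
            simp [Finset.sum_const, nsmul_eq_mul]
    have hkey : (1 : ℝ≥0∞) / N ≤ σ (B j₀) := by
      have h2 : ((k : ℝ≥0∞) + 1) * (1 / N) ≤ ((k : ℝ≥0∞) + 1) * σ (B j₀) := by
        calc ((k : ℝ≥0∞) + 1) * (1 / N) = ((k : ℝ≥0∞) + 1) / N := mul_one_div _ _
          _ = σ Set.univ := by rw [hmass]; push_cast; ring_nf
          _ ≤ ∑ j : Fin (k + 1), σ (B j) := h1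
          _ ≤ ((k : ℝ≥0∞) + 1) * σ (B j₀) := hsum
      exact (ENNReal.mul_le_mul_iff_right (lt_of_lt_of_le zero_lt_one le_add_self).ne' (ENNReal.add_ne_top.mpr ⟨ENNReal.natCast_ne_top k, ENNReal.one_ne_top⟩)).mp h2
    have hNne : (N : ℝ≥0∞) ≠ 0 := Nat.cast_ne_zero.mpr (by omega)
    have h1N0 : (1 : ℝ≥0∞) / N ≠ 0 := by simp [ENNReal.div_eq_zero_iff]
    have h1Ntop : (1 : ℝ≥0∞) / N ≠ ⊤ := by
      exact (ENNReal.div_lt_top (by simp) hNne).ne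
    have hB0 : σ (B j₀) ≠ 0 := fun h => h1N0 (le_antisymm (h ▸ hkey) zero_le)
    have hBtop : σ (B j₀) ≠ ⊤ :=
      (lt_of_le_of_lt (Measure.le_iff'.mp hle _) (measure_lt_top μ _)).ne
    set ν0 : Measure H := ((1 / N : ℝ≥0∞) / σ (B j₀)) • σ.restrict (B j₀) with hν0
    have hν0univ : ν0 Set.univ = 1 / N := by
      rw [hν0, Measure.smul_apply, smul_eq_mul, Measure.restrict_apply_univ]
      exact ENNReal.div_mul_cancel hB0 hBtop
    have hν0le : ν0 ≤ σ := by
      refine Measure.le_iff'.mpr fun s => ?_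
      have hc1 : (1 / N : ℝ≥0∞) / σ (B j₀) ≤ 1 := by
        rw [ENNReal.div_le_iff hB0 hBtop, one_mul]
        exact hkey
      calc ν0 s = ((1 / N : ℝ≥0∞) / σ (B j₀)) * σ.restrict (B j₀) s := by
            rw [hν0, Measure.smul_apply, smul_eq_mul]
        _ ≤ 1 * σ.restrict (B j₀) s := mul_le_mul' hc1 le_rfl
        _ = σ.restrict (B j₀) s := one_mul _
        _ ≤ σ s := Measure.le_iff'.mp Measure.restrict_le_self s
    have hν0supp : ν0 (B j₀)ᶜ = 0 := by
      rw [hν0, Measure.smul_apply, smul_eq_mul,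
        Measure.restrict_apply (ball_meas _ _).compl]
      simp
      right
      have hBj : B j₀ = {x : H | edist x (c j₀) ≤ 2 * rN Γ (k + 1)} := rfl
      rw [hBj, Set.compl_inter_self, measure_empty]
    haveI : IsFiniteMeasure ν0 := ⟨by
      rw [hν0univ]
      exact lt_of_le_of_ne le_top h1Ntop⟩
    set σ' : Measure H := σ - ν0 with hσ'
    have hadd : σ' + ν0 = σ := Measure.sub_add_cancel_of_le hν0le
    have hσ'le : σ' ≤ μ := le_trans Measure.sub_le hle
    have hσ'univ : σ' Set.univ = k / N := by
      rw [hσ', Measure.sub_apply MeasurableSet.univ hν0le, hmass, hν0univ]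
      push_cast
      rw [ENNReal.add_div, ENNReal.add_sub_cancel_right h1Ntop]
    obtain ⟨ω, ν, hmassν, hsuppν, hsum'⟩ := ih σ' hσ'le hσ'univ
    classical
    refine ⟨Function.update ω (k + 1) (c j₀), Function.update ν (k + 1) ν0, ?_, ?_, ?_⟩
    · intro i hi
      rcases eq_or_ne i (k + 1) with rfl | hne
      · simp [Function.update_self, hν0univ]
      · rw [Function.update_of_ne hne]
        refine hmassν i ?_
        simp only [Finset.mem_Icc] at hi ⊢
        omega
    · intro i hi
      rcases eq_or_ne i (k + 1) with rfl | hne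
      · simpa [Function.update_self] using hν0supp
      · rw [Function.update_of_ne hne, Function.update_of_ne hne]
        refine hsuppν i ?_
        simp only [Finset.mem_Icc] at hi ⊢
        omega
    · rw [Finset.sum_Icc_succ_top (Nat.le_add_left 1 k)]
      rw [Function.update_self]
      have : ∑ i ∈ Finset.Icc 1 k, Function.update ν (k + 1) ν0 i
          = ∑ i ∈ Finset.Icc 1 k, ν i := by
        refine Finset.sum_congr rfl fun i hi => ?_
        have : i ≠ k + 1 := by
          simp only [Finset.mem_Icc] at hi; omega
        rw [Function.update_of_ne this]
      rw [this, ← hsum', ← hadd]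

lemma map_fsum {α β ι : Type*} [MeasurableSpace α] [MeasurableSpace β]
    (s : Finset ι) (m : ι → Measure α) {f : α → β} (hf : Measurable f) :
    (∑ i ∈ s, m i).map f = ∑ i ∈ s, (m i).map f := by
  ext t ht
  rw [Measure.map_apply hf ht, Measure.finset_sum_apply, Measure.finset_sum_apply]
  exact Finset.sum_congr rfl fun i _ => (Measure.map_apply hf ht).symm

end Aux

/-- For a probability measure `μ` supported on `Γ ⊆ H`:
`h_N(μ)² ≤ (4/N)·Σ_{1≤i≤N} r_i(Γ)²`; moreover there are points `ω_i` and measures `ν_i` of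
mass `1/N`, with `ν_i` supported in the closed ball `B(ω_i, 2 r_i(Γ))`, such that
`μ = Σ_i ν_i` and `W₂(μ, (1/N)Σ δ_{ω_i})² ≤ (1/N)Σ_i (2 r_i(Γ))²`. -/
theorem stmt_8 {H : Type*} [MetricSpace H] [MeasurableSpace H] [BorelSpace H] [Nonempty H]
    (Γ : Set H) (μ : Measure H) (hμ : IsProbabilityMeasure μ) (hsupp : ∀ᵐ x ∂μ, x ∈ Γ)
    (N : ℕ) (hN1 : 1 ≤ N) :
    hN μ N ^ 2 ≤ (4 / N) * ∑ i ∈ Finset.Icc 1 N, rN Γ i ^ 2 ∧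
    ∃ (ω : ℕ → H) (ν : ℕ → Measure H),
      (∀ i ∈ Finset.Icc 1 N, ν i Set.univ = 1 / N) ∧
      (∀ i ∈ Finset.Icc 1 N, ν i {x : H | edist x (ω i) ≤ 2 * rN Γ i}ᶜ = 0) ∧
      μ = ∑ i ∈ Finset.Icc 1 N, ν i ∧
      W2sq μ ((N : ℝ≥0∞)⁻¹ • ∑ i ∈ Finset.Icc 1 N, Measure.dirac (ω i)) ≤
        (N : ℝ≥0∞)⁻¹ * ∑ i ∈ Finset.Icc 1 N, (2 * rN Γ i) ^ 2 := by
  classical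
  haveI := hμ
  have hNne : (N : ℝ≥0∞) ≠ 0 := Nat.cast_ne_zero.mpr (by omega)
  obtain ⟨ω, ν, hmassν, hsuppν, hsum⟩ := build_lem Γ μ hsupp N hN1 N μ le_rfl
    (by rw [measure_univ, ENNReal.div_self hNne (ENNReal.natCast_ne_top N)])
  set π : Measure (H × H) := ∑ i ∈ Finset.Icc 1 N, (ν i).map (fun x => (x, ω i)) with hπ
  have hpair : ∀ i : ℕ, Measurable (fun x : H => (x, ω i)) :=
    fun i => measurable_id.prodMk measurable_const
  have hfst : π.map Prod.fst = μ := by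
    rw [hπ, map_fsum _ _ measurable_fst]
    rw [hsum]
    refine Finset.sum_congr rfl fun i _ => ?_
    rw [Measure.map_map measurable_fst (hpair i)]
    have : (Prod.fst ∘ fun x : H => (x, ω i)) = id := rfl
    rw [this, Measure.map_id]
  have hsnd : π.map Prod.snd =
      (N : ℝ≥0∞)⁻¹ • ∑ i ∈ Finset.Icc 1 N, Measure.dirac (ω i) := by
    rw [hπ, map_fsum _ _ measurable_snd]
    rw [Finset.smul_sum]
    refine Finset.sum_congr rfl fun i hi => ?_
    rw [Measure.map_map measurable_snd (hpair i)]
    have : (Prod.snd ∘ fun x : H => (x, ω i)) = fun _ : H => ω i := rfl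
    rw [this, Measure.map_const, hmassν i hi, one_div]
  have hcost : ∫⁻ p, edist p.1 p.2 ^ 2 ∂π ≤
      (N : ℝ≥0∞)⁻¹ * ∑ i ∈ Finset.Icc 1 N, (2 * rN Γ i) ^ 2 := by
    rw [hπ, lintegral_finset_sum_measure]
    have hstep : ∀ i ∈ Finset.Icc 1 N,
        ∫⁻ p, edist p.1 p.2 ^ 2 ∂((ν i).map (fun x => (x, ω i))) ≤
          (2 * rN Γ i) ^ 2 * (1 / N) := by
      intro i hi
      refine le_trans (lintegral_map_le (fun p : H × H => edist p.1 p.2 ^ 2) (fun x : H => (x, ω i))) ?_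
      have hae : ∀ᵐ x ∂(ν i), edist x (ω i) ^ 2 ≤ (2 * rN Γ i) ^ 2 := by
        have hmem : {x : H | edist x (ω i) ≤ 2 * rN Γ i} ∈ ae (ν i) :=
          mem_ae_iff.mpr (hsuppν i hi)
        filter_upwards [hmem] with x hx
        exact pow_le_pow_left₀ zero_le hx 2
      calc ∫⁻ x, edist x (ω i) ^ 2 ∂(ν i) ≤ ∫⁻ _x, (2 * rN Γ i) ^ 2 ∂(ν i) :=
            lintegral_mono_ae hae
        _ = (2 * rN Γ i) ^ 2 * ν i Set.univ := lintegral_const _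
        _ = (2 * rN Γ i) ^ 2 * (1 / N) := by rw [hmassν i hi]
    calc ∑ i ∈ Finset.Icc 1 N, ∫⁻ p, edist p.1 p.2 ^ 2 ∂((ν i).map (fun x => (x, ω i)))
        ≤ ∑ i ∈ Finset.Icc 1 N, (2 * rN Γ i) ^ 2 * (1 / N) := Finset.sum_le_sum hstep
      _ = (N : ℝ≥0∞)⁻¹ * ∑ i ∈ Finset.Icc 1 N, (2 * rN Γ i) ^ 2 := by
          rw [← Finset.sum_mul, one_div, mul_comm]
  have hW : W2sq μ ((N : ℝ≥0∞)⁻¹ • ∑ i ∈ Finset.Icc 1 N, Measure.dirac (ω i)) ≤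
      (N : ℝ≥0∞)⁻¹ * ∑ i ∈ Finset.Icc 1 N, (2 * rN Γ i) ^ 2 := by
    refine le_trans ?_ hcost
    exact iInf₂_le π ⟨hfst, hsnd⟩
  refine ⟨?_, ω, ν, hmassν, hsuppν, hsum, hW⟩
  -- first claim
  have hre : ∑ j : Fin N, Measure.dirac (ω (j.1 + 1)) =
      ∑ i ∈ Finset.Icc 1 N, Measure.dirac (ω i) := by
    rw [Fin.sum_univ_eq_sum_range (fun j => Measure.dirac (ω (j + 1)))]
    refine Finset.sum_nbij' (fun j => j + 1) (fun j => j - 1) ?_ ?_ ?_ ?_ ?_ <;>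
      simp_all <;> omega
  have h1 : hN μ N ≤
      (W2sq μ ((N : ℝ≥0∞)⁻¹ • ∑ i ∈ Finset.Icc 1 N, Measure.dirac (ω i))) ^ (1 / 2 : ℝ) := by
    have := iInf_le (fun ω' : Fin N → H =>
      (W2sq μ ((N : ℝ≥0∞)⁻¹ • ∑ j, Measure.dirac (ω' j))) ^ (1 / 2 : ℝ))
      (fun j : Fin N => ω (j.1 + 1))
    rw [hre] at this
    exact this
  have hsq : ∀ x : ℝ≥0∞, (x ^ (1 / 2 : ℝ)) ^ 2 = x := by
    intro x
    rw [← ENNReal.rpow_natCast (x ^ (1 / 2 : ℝ)) 2, ← ENNReal.rpow_mul]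
    norm_num
  calc hN μ N ^ 2
      ≤ ((W2sq μ ((N : ℝ≥0∞)⁻¹ • ∑ i ∈ Finset.Icc 1 N, Measure.dirac (ω i))) ^ (1 / 2 : ℝ)) ^ 2 :=
        pow_le_pow_left₀ zero_le h1 2
    _ = W2sq μ ((N : ℝ≥0∞)⁻¹ • ∑ i ∈ Finset.Icc 1 N, Measure.dirac (ω i)) := hsq _
    _ ≤ (N : ℝ≥0∞)⁻¹ * ∑ i ∈ Finset.Icc 1 N, (2 * rN Γ i) ^ 2 := hW
    _ = (4 / N) * ∑ i ∈ Finset.Icc 1 N, rN Γ i ^ 2 := by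
        have : ∀ i : ℕ, (2 * rN Γ i) ^ 2 = 4 * rN Γ i ^ 2 := by
          intro i
          rw [mul_pow]
          norm_num
        simp_rw [this]
        rw [← Finset.mul_sum, ← mul_assoc, ENNReal.div_eq_inv_mul, mul_comm ((N : ℝ≥0∞)⁻¹) 4]

end
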